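/- Let f be a monotone submodular set function on a finite ground set N with f(∅) ≥ 0, let k ≥ 1, and let A ⊆ N with |A| ≥ k. Let A' be the set of the last k elements added to A by a process in which each element a added to A satisfied the marginal-gain condition f(A_prev ∪ {a}) - f(A_prev) ≥ f(A_prev)/k (where A_prev is the value of A just before a was added). Then f(A \ A') ≤ f(A)/2, and consequently f(A') ≥ f(A)/2. -/

import Mathlib

lemma subadd_aux {α : Type*} [DecidableEq α] (f : Finset α → ℝ)
    (hmono : ∀ S T : Finset α, S ⊆ T → f S ≤ f T)
    (hsub : ∀ S T : Finset α, S ⊆ T → ∀ x ∉ T,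
      f (insert x T) - f T ≤ f (insert x S) - f S)
    (T S : Finset α) : f (S ∪ T) + f ∅ ≤ f S + f T := by
  induction T using Finset.induction_on with
  | empty => simp
  | @insert x T hx ih =>
    by_cases hxs : x ∈ S ∪ T
    · have heq : S ∪ insert x T = S ∪ T := by
        rw [Finset.union_insert, Finset.insert_eq_self.2 hxs]
      have hmt := hmono T (insert x T) (Finset.subset_insert _ _)
      rw [heq]; linarith
    · have h1 : S ∪ insert x T = insert x (S ∪ T) := by rw [Finset.union_insert]
      have h2 := hsub T (S ∪ T) Finset.subset_union_right x hxs
      rw [h1]; linarith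

/-- For a monotone submodular `f` with `f ∅ ≥ 0`, if `A` is built by
adding elements `a 0, a 1, …, a (m-1)` one at a time, each satisfying the
marginal-gain condition `f(A_prev ∪ {a i}) - f(A_prev) ≥ f(A_prev)/k`, and `m ≥ k`,
then with `A'` the last `k` elements added, `f(A \ A') ≤ f(A)/2` and `f(A') ≥ f(A)/2`. -/
theorem stmt0 {α : Type*} [DecidableEq α] (f : Finset α → ℝ)
    (hmono : ∀ S T : Finset α, S ⊆ T → f S ≤ f T)
    (hsub : ∀ S T : Finset α, S ⊆ T → ∀ x ∉ T,
      f (insert x T) - f T ≤ f (insert x S) - f S)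
    (hempty : 0 ≤ f ∅)
    (k : ℕ) (hk : 1 ≤ k) (m : ℕ) (hm : k ≤ m)
    (a : ℕ → α) (hinj : ∀ i < m, ∀ j < m, a i = a j → i = j)
    (hgain : ∀ i < m,
      f (insert (a i) ((Finset.range i).image a)) - f ((Finset.range i).image a)
        ≥ f ((Finset.range i).image a) / k) :
    f ((Finset.range m).image a \ ((Finset.Ico (m - k) m).image a))
        ≤ f ((Finset.range m).image a) / 2 ∧
    f ((Finset.Ico (m - k) m).image a) ≥ f ((Finset.range m).image a) / 2 := by
  set B : ℕ → Finset α := fun i => (Finset.range i).image a with hB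
  have hk0 : (0:ℝ) < k := by exact_mod_cast hk
  have hnn : ∀ i, 0 ≤ f (B i) :=
    fun i => le_trans hempty (hmono _ _ (Finset.empty_subset _))
  have hstep : ∀ i < m, f (B i) * (1 + 1/k) ≤ f (B (i+1)) := by
    intro i hi
    have h := hgain i hi
    have hB1 : B (i+1) = insert (a i) (B i) := by
      simp [hB, Finset.range_add_one, Finset.image_insert]
    rw [hB1]
    have hr : f (B i) * (1 + 1/(k:ℝ)) = f (B i) + f (B i) / k := by ring
    rw [hr]; linarith
  have hpow : ∀ j, j ≤ k → f (B (m-k)) * (1 + 1/k)^j ≤ f (B (m-k+j)) := by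
    intro j
    induction j with
    | zero => intro _; simp
    | succ j ih =>
      intro hj
      have hj' : j ≤ k := Nat.le_of_succ_le hj
      have h1 := ih hj'
      have hlt : m - k + j < m := by omega
      have h2 := hstep _ hlt
      have hmul : f (B (m-k)) * (1 + 1/k)^(j+1)
          = (f (B (m-k)) * (1 + 1/k)^j) * (1 + 1/k) := by ring
      have hpos : (0:ℝ) ≤ 1 + 1/k := by positivity
      calc f (B (m-k)) * (1 + 1/k)^(j+1)
          = (f (B (m-k)) * (1 + 1/k)^j) * (1 + 1/k) := hmul
        _ ≤ f (B (m-k+j)) * (1 + 1/k) := mul_le_mul_of_nonneg_right h1 hpos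
        _ ≤ f (B (m-k+j+1)) := h2
  have hmk : m - k + k = m := by omega
  have hkey : f (B (m-k)) * (1 + 1/k)^k ≤ f (B m) := by
    have := hpow k le_rfl
    rwa [hmk] at this
  have hbern : (2:ℝ) ≤ (1 + 1/k)^k := by
    have h0 : (0:ℝ) ≤ 1/k := by positivity
    have := one_add_mul_le_pow (a := 1/(k:ℝ)) (by linarith) k
    have hkk : (k:ℝ) * (1/k) = 1 := by field_simp
    nlinarith
  have hhalf : f (B (m-k)) ≤ f (B m) / 2 := by
    nlinarith [hnn (m-k), hkey, hbern]
  have hsetdiff : B m \ ((Finset.Ico (m - k) m).image a) = B (m-k) := by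
    ext x
    simp only [hB, Finset.mem_sdiff, Finset.mem_image, Finset.mem_range, Finset.mem_Ico]
    constructor
    · rintro ⟨⟨i, hi, rfl⟩, hni⟩
      refine ⟨i, ?_, rfl⟩
      by_contra h
      exact hni ⟨i, ⟨by omega, hi⟩, rfl⟩
    · rintro ⟨i, hi, rfl⟩
      refine ⟨⟨i, by omega, rfl⟩, ?_⟩
      rintro ⟨j, ⟨hj1, hj2⟩, hji⟩
      have := hinj j hj2 i (by omega) hji
      omega
  have hunion : B (m-k) ∪ ((Finset.Ico (m - k) m).image a) = B m := by
    rw [hB]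
    rw [← Finset.image_union]
    congr 1
    rw [Finset.range_eq_Ico, Finset.range_eq_Ico]
    exact Finset.Ico_union_Ico_eq_Ico (Nat.zero_le _) (by omega)
  have hsa := subadd_aux f hmono hsub ((Finset.Ico (m - k) m).image a) (B (m-k))
  rw [hunion] at hsa
  constructor
  · rw [hsetdiff]; exact hhalf
  · linarith
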